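/- arXiv:1807.02208 — 3 statements merged into one kernel-verified Lean document; each statement's English description precedes it below -/
import Mathlib

section
/- Every generic Vopěnka-like cardinal is a strong limit cardinal. -/
open FirstOrder Language Cardinal Set

universe u

/-- "There is a generic elementary embedding of `M` into `N`": player II has a winning
strategy in the embedding game `G(M, N)`, in which in round `n` player I plays `xₙ ∈ M` and
player II (following a strategy that may depend on all of player I's moves so far) replies
`yₙ ∈ N`, and player II wins a run iff for every `n` and every formula `φ(v₀, …, vₙ)`,
`M ⊨ φ(x₀, …, xₙ) ↔ N ⊨ φ(y₀, …, yₙ)`. -/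
def IsGenericEmbeddable (L : FirstOrder.Language.{u, u}) (M N : Type u) [L.Structure M] [L.Structure N] :
    Prop :=
  ∃ σ : (n : ℕ) → (Fin (n + 1) → M) → N,
    ∀ (x : ℕ → M) (n : ℕ) (φ : L.Formula (Fin (n + 1))),
      φ.Realize (fun i : Fin (n + 1) => x i) ↔
        φ.Realize (fun i : Fin (n + 1) => σ (i : ℕ) (fun j : Fin ((i : ℕ) + 1) => x (j : ℕ)))

/-- An uncountable cardinal `κ` is a generic Vopěnka-like cardinal if for every first-order
language `L` of cardinality less than `κ` and every `κ`-indexed family of `L`-structures, each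
of cardinality less than `κ`, there are two distinct indices such that there is a generic
elementary embedding between the corresponding structures. -/
def IsGenericVopenkaLike (κ : Cardinal.{u}) : Prop :=
  ℵ₀ < κ ∧
    ∀ L : FirstOrder.Language.{u, u}, L.card < κ →
      ∀ (M : κ.ord.ToType → Type u) (S : ∀ i, L.Structure (M i)),
        (∀ i, #(M i) < κ) →
        ∃ i j, i ≠ j ∧ @IsGenericEmbeddable L (M i) (M j) (S i) (S j)

/-- Type of relation symbols of the unary language on `X`. -/
def RelsAux (X : Type u) : ℕ → Type u
  | 1 => X
  | 0 => PEmpty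
  | _ + 2 => PEmpty

/-- The relational language with unary predicates indexed by `X`. -/
def unaryLang (X : Type u) : FirstOrder.Language.{u, u} :=
  ⟨fun _ => PEmpty, RelsAux X⟩

/-- The symbols of `unaryLang X` biject with `X`. -/
def unaryLangSymbolsEquiv (X : Type u) : (unaryLang X).Symbols ≃ X where
  toFun := fun s =>
    match s with
    | Sum.inl ⟨_, f⟩ => f.elim
    | Sum.inr ⟨1, x⟩ => x
    | Sum.inr ⟨0, r⟩ => r.elim
    | Sum.inr ⟨_ + 2, r⟩ => r.elim
  invFun := fun x => Sum.inr ⟨1, x⟩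
  left_inv := by
    rintro (⟨n, f⟩ | ⟨(_ | _ | n), r⟩)
    · exact f.elim
    · exact r.elim
    · rfl
    · exact r.elim
  right_inv := fun x => rfl

/-- The structure on `PUnit` where the predicate `x` holds iff `x ∈ A`. -/
def unaryStructure (X : Type u) (A : Set X) : (unaryLang X).Structure PUnit.{u + 1} where
  funMap := fun f _ => f.elim
  RelMap := fun {n} r _ =>
    match n, r with
    | 1, x => x ∈ A
    | 0, r => r.elim
    | _ + 2, r => r.elim

theorem unaryLang_card (X : Type u) : (unaryLang X).card = #X :=
  Cardinal.mk_congr (unaryLangSymbolsEquiv X)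

/-- Every generic Vopěnka-like cardinal is a strong limit cardinal. -/
theorem every_genericVopenkaLike_isStrongLimit (κ : Cardinal.{u})
    (h : IsGenericVopenkaLike κ) : κ.IsStrongLimit := by
  obtain ⟨haleph, hvop⟩ := h
  refine ⟨fun h0 => by simp [h0] at haleph, fun lam hlam => ?_⟩
  by_contra hle
  push_neg at hle
  set X : Type u := lam.out with hX
  have hmkX : #X = lam := Cardinal.mk_out lam
  have hκle : κ ≤ #(Set X) := by
    rwa [Cardinal.mk_set, hmkX]
  have : #(κ.ord.ToType) ≤ #(Set X) := by rwa [Cardinal.mk_ord_toType]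
  obtain ⟨f⟩ := this
  have hcard : (unaryLang X).card < κ := by
    rw [unaryLang_card, hmkX]; exact hlam
  obtain ⟨i, j, hij, σ, hσ⟩ :=
    hvop (unaryLang X) hcard (fun _ => PUnit.{u + 1})
      (fun i => unaryStructure X (f i))
      (fun _ => by
        simpa using lt_trans (by norm_num : (1 : Cardinal) < ℵ₀) haleph)
  apply hij
  apply f.injective
  ext x
  have := hσ (fun _ => PUnit.unit) 0
    (Relations.formula (show (unaryLang X).Relations 1 from x) ![Term.var 0])
  simp only [Formula.realize_rel] at this
  exact this
end

section
/- If κ is an uncountable cardinal that is not a generic Vopěnka-like cardinal, then there are at least 2^κ generically hereditary sets of structures. -/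
open FirstOrder Language Cardinal Set

universe u

/-- A generic Vopěnka cardinal is a regular generic Vopěnka-like cardinal. -/
def IsGenericVopenka (κ : Cardinal.{u}) : Prop :=
  κ.IsRegular ∧ IsGenericVopenkaLike κ

/-- An uncountable cardinal `κ` is `ω`-Erdős (in the sense of Baumgartner) if for every club
`C` in `κ` (a subset of the ordinals below `κ` that is closed under suprema and unbounded)
and every regressive `f : [C]^{<ω} → κ` (i.e., `f a < min a` for every nonempty finite
`a ⊆ C`), there is a subset of `C` of order type `ω` that is homogeneous for `f`. -/
def IsOmegaErdos (κ : Cardinal.{u}) : Prop :=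
  ℵ₀ < κ ∧
    ∀ C : Set Ordinal.{u}, C ⊆ Set.Iio κ.ord →
      (∀ s : Set Ordinal.{u}, s ⊆ C → s.Nonempty → sSup s < κ.ord → sSup s ∈ C) →
      (∀ α < κ.ord, ∃ β ∈ C, α < β) →
      ∀ f : Finset Ordinal.{u} → Ordinal.{u},
        (∀ a : Finset Ordinal.{u}, (ha : a.Nonempty) → ↑a ⊆ C → f a < a.min' ha) →
        ∃ g : ℕ → Ordinal.{u}, StrictMono g ∧ Set.range g ⊆ C ∧
          ∀ a b : Finset Ordinal.{u}, ↑a ⊆ Set.range g → ↑b ⊆ Set.range g →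
            a.card = b.card → f a = f b

/-- `κ` is a limit of cardinals satisfying `P`. -/
def IsLimitOf (P : Cardinal.{u} → Prop) (κ : Cardinal.{u}) : Prop :=
  κ ≠ 0 ∧ ∀ α < κ, ∃ η, α < η ∧ η < κ ∧ P η

/-- A first-order language whose relation and function symbols of each arity are indexed by
(sets of) ordinals below `κ`, represented by elements of `κ.ord.ToType`. -/
structure SmallLanguage (κ : Cardinal.{u}) where
  fns : ℕ → Set κ.ord.ToType
  rels : ℕ → Set κ.ord.ToType

/-- The first-order language associated to a `SmallLanguage`. -/
def SmallLanguage.toLanguage {κ : Cardinal.{u}} (L : SmallLanguage κ) :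
    FirstOrder.Language.{u, u} where
  Functions n := ↥(L.fns n)
  Relations n := ↥(L.rels n)

/-- An `L`-structure whose universe is the set of ordinals below some ordinal less than `κ`
(represented as the initial segment of `κ.ord.ToType` below some point). -/
structure SmallStructure (κ : Cardinal.{u}) (L : FirstOrder.Language.{u, u}) where
  top : κ.ord.ToType
  str : L.Structure ↥(Set.Iio top)

/-- There is a generic elementary embedding between two `SmallStructure`s for the same
language. -/
def SmallStructure.GenEmb {κ : Cardinal.{u}} {L : FirstOrder.Language.{u, u}}
    (M N : SmallStructure κ L) : Prop :=
  @IsGenericEmbeddable L ↥(Set.Iio M.top) ↥(Set.Iio N.top) M.str N.str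

/-- The type of all structures (for languages with symbols indexed by ordinals below `κ`)
whose universe is the set of ordinals below some ordinal less than `κ`. -/
def StructuresType (κ : Cardinal.{u}) : Type u :=
  Σ L : SmallLanguage κ, SmallStructure κ L.toLanguage

/-- A set `𝒜` of structures is generically hereditary if there is a first-order language `L`
of cardinality less than `κ` (with symbols indexed by ordinals below `κ`) such that every
element of `𝒜` is an `L`-structure and, whenever `N ∈ 𝒜` and there is a generic elementary
embedding of `M` into `N` (for `L`-structures `M`, `N` whose universes are sets of ordinals
below ordinals less than `κ`), also `M ∈ 𝒜`. -/
def GenericallyHereditary (κ : Cardinal.{u}) (𝒜 : Set (StructuresType κ)) : Prop :=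
  ∃ L : SmallLanguage κ, L.toLanguage.card < κ ∧
    (∀ M ∈ 𝒜, M.1 = L) ∧
    ∀ M N : SmallStructure κ L.toLanguage,
      (⟨L, N⟩ : StructuresType κ) ∈ 𝒜 → M.GenEmb N → (⟨L, M⟩ : StructuresType κ) ∈ 𝒜

theorem genEmb_refl (L : FirstOrder.Language.{u, u}) (M : Type u) [L.Structure M] :
    IsGenericEmbeddable L M M :=
  ⟨fun n x => x (Fin.last n), fun _ _ _ => Iff.rfl⟩

theorem genEmb_trans {L : FirstOrder.Language.{u, u}} {M N P : Type u} [L.Structure M]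
    [L.Structure N] [L.Structure P] (h1 : IsGenericEmbeddable L M N)
    (h2 : IsGenericEmbeddable L N P) : IsGenericEmbeddable L M P := by
  obtain ⟨σ, hσ⟩ := h1
  obtain ⟨τ, hτ⟩ := h2
  refine ⟨fun n x => τ n fun j => σ (j : ℕ) fun k => x ⟨(k : ℕ), by
    have hk := k.2; have hj := j.2; omega⟩, fun x n φ => ?_⟩
  exact (hσ x n φ).trans (hτ (fun i => σ i fun j : Fin (i + 1) => x (j : ℕ)) n φ)

theorem genEmb_of_equiv {L : FirstOrder.Language.{u, u}} {M N : Type u} [L.Structure M]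
    [L.Structure N] (g : M ≃[L] N) : IsGenericEmbeddable L M N := by
  refine ⟨fun n x => g (x (Fin.last n)), fun x n φ => ?_⟩
  exact (StrongHomClass.realize_formula g φ (v := fun i : Fin (n + 1) => x (i : ℕ))).symm

theorem genEmb_of_expansion {L L' : FirstOrder.Language.{u, u}} (ψ : L →ᴸ L') {M N : Type u}
    [L.Structure M] [L'.Structure M] [ψ.IsExpansionOn M]
    [L.Structure N] [L'.Structure N] [ψ.IsExpansionOn N]
    (h : IsGenericEmbeddable L' M N) : IsGenericEmbeddable L M N := by
  obtain ⟨σ, hσ⟩ := h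
  refine ⟨σ, fun x n φ => ?_⟩
  have h2 := hσ x n (ψ.onFormula φ)
  rwa [LHom.realize_onFormula, LHom.realize_onFormula] at h2

noncomputable def transferStructure {L L' : FirstOrder.Language.{u, u}}
    (eF : ∀ n, L'.Functions n ≃ L.Functions n) (eR : ∀ n, L'.Relations n ≃ L.Relations n)
    (X : Type u) [L.Structure X] : L'.Structure X where
  funMap f x := Structure.funMap (eF _ f) x
  RelMap r x := Structure.RelMap (eR _ r) x

noncomputable def transferLHom {L L' : FirstOrder.Language.{u, u}}
    (eF : ∀ n, L'.Functions n ≃ L.Functions n) (eR : ∀ n, L'.Relations n ≃ L.Relations n) :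
    L →ᴸ L' where
  onFunction _ f := (eF _).symm f
  onRelation _ r := (eR _).symm r

theorem transfer_isExpansionOn {L L' : FirstOrder.Language.{u, u}}
    (eF : ∀ n, L'.Functions n ≃ L.Functions n) (eR : ∀ n, L'.Relations n ≃ L.Relations n)
    (X : Type u) [L.Structure X] :
    @LHom.IsExpansionOn L L' (transferLHom eF eR) X _ (transferStructure eF eR X) := by
  letI := transferStructure eF eR X
  constructor <;> intro _ f x <;>
    simp [transferLHom, transferStructure, Structure.funMap, Structure.RelMap]
  · exact congrArg (fun g => Structure.funMap g x) ((eF _).apply_symm_apply f)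
  · exact iff_of_eq (congrArg (fun g => Structure.RelMap g x) ((eR _).apply_symm_apply f))

theorem genEmb_transfer {L L' : FirstOrder.Language.{u, u}}
    (eF : ∀ n, L'.Functions n ≃ L.Functions n) (eR : ∀ n, L'.Relations n ≃ L.Relations n)
    {M N : Type u} [L.Structure M] [L.Structure N]
    (h : @IsGenericEmbeddable L' M N (transferStructure eF eR M) (transferStructure eF eR N)) :
    IsGenericEmbeddable L M N := by
  letI := transferStructure eF eR M
  letI := transferStructure eF eR N
  haveI := transfer_isExpansionOn eF eR M
  haveI := transfer_isExpansionOn eF eR N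
  exact genEmb_of_expansion (transferLHom eF eR) h

/-- If `κ` is an uncountable cardinal that is not a generic Vopěnka-like cardinal, then there
are at least `2 ^ κ` generically hereditary sets of structures. -/
theorem two_pow_le_generically_hereditary_of_not_genericVopenkaLike (κ : Cardinal.{u})
    (hκ : ℵ₀ < κ) (h : ¬ IsGenericVopenkaLike κ) :
    2 ^ κ ≤ #{𝒜 : Set (StructuresType κ) | GenericallyHereditary κ 𝒜} := by

  rw [IsGenericVopenkaLike] at h
  push_neg at h
  obtain ⟨L, hL, Mi, Si, hMi, hne⟩ := h hκ
  have hι : #(κ.ord.ToType) = κ := by rw [Cardinal.mk_toType, Cardinal.card_ord]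
  -- embed the symbols of L into κ.ord.ToType
  have hFn : ∀ n : ℕ, #(L.Functions n) < κ := fun n =>
    lt_of_le_of_lt (Cardinal.mk_le_of_injective (f := fun f => (Sum.inl ⟨n, f⟩ : L.Symbols))
      (by intro a b hab; simpa using hab)) hL
  have hRn : ∀ n : ℕ, #(L.Relations n) < κ := fun n =>
    lt_of_le_of_lt (Cardinal.mk_le_of_injective (f := fun r => (Sum.inr ⟨n, r⟩ : L.Symbols))
      (by intro a b hab; simpa using hab)) hL
  have F : ∀ n, L.Functions n ↪ κ.ord.ToType := fun n =>
    Classical.choice ((Cardinal.le_def _ _).mp (le_of_lt (lt_of_lt_of_eq (hFn n) hι.symm)))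
  have R : ∀ n, L.Relations n ↪ κ.ord.ToType := fun n =>
    Classical.choice ((Cardinal.le_def _ _).mp (le_of_lt (lt_of_lt_of_eq (hRn n) hι.symm)))
  set L' : SmallLanguage κ := ⟨fun n => Set.range (F n), fun n => Set.range (R n)⟩ with hL'def
  have eF : ∀ n, L'.toLanguage.Functions n ≃ L.Functions n := fun n =>
    (Equiv.ofInjective _ (F n).injective).symm
  have eR : ∀ n, L'.toLanguage.Relations n ≃ L.Relations n := fun n =>
    (Equiv.ofInjective _ (R n).injective).symm
  have hcard : L'.toLanguage.card < κ := by
    have hc : L'.toLanguage.card = L.card := Cardinal.mk_congr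
      ((Equiv.sigmaCongrRight eF).sumCongr (Equiv.sigmaCongrRight eR))
    rwa [hc]
  -- realize each Mi as a structure on an initial segment of κ.ord.ToType
  have htop : ∀ i, ∃ t : κ.ord.ToType, Nonempty (Mi i ≃ ↥(Set.Iio t)) := by
    intro i
    have hord : (#(Mi i)).ord ∈ Set.Iio κ.ord := Cardinal.ord_lt_ord.mpr (hMi i)
    haveI : IsWellOrder κ.ord.ToType (· < ·) := @isWellOrder_lt _ _ _
    set tt : κ.ord.ToType := Ordinal.ToType.mk (o := κ.ord) ⟨(#(Mi i)).ord, hord⟩ with htt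
    refine ⟨tt, Cardinal.eq.mp ?_⟩
    have h1 := Ordinal.card_typein (r := ((· < ·) : κ.ord.ToType → κ.ord.ToType → Prop)) tt
    have h2 := congrArg Subtype.val
      ((Ordinal.ToType.mk (o := κ.ord)).symm_apply_apply ⟨(#(Mi i)).ord, hord⟩)
    rw [show #(↥(Set.Iio tt)) = #{ y // y < tt } from rfl, ← h1]
    rw [show Ordinal.typein ((· < ·) : κ.ord.ToType → κ.ord.ToType → Prop) tt
      = (#(Mi i)).ord from h2]
    exact (Cardinal.card_ord _).symm
  choose top eqv0 using htop
  have eqv : ∀ i, Mi i ≃ ↥(Set.Iio (top i)) := fun i => (eqv0 i).some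
  letI strL : ∀ i, L.Structure ↥(Set.Iio (top i)) := fun i =>
    @Equiv.inducedStructure L (Mi i) _ (Si i) (eqv i)
  let NN : κ.ord.ToType → SmallStructure κ L'.toLanguage := fun i =>
    ⟨top i, transferStructure eF eR _⟩
  -- key: generic embeddability between the NN's forces equal indices
  have key : ∀ i j, (NN i).GenEmb (NN j) → i = j := by
    intro i j hemb
    by_contra hij
    apply hne i j hij
    have h1 : IsGenericEmbeddable L ↥(Set.Iio (top i)) ↥(Set.Iio (top j)) :=
      genEmb_transfer eF eR hemb
    exact genEmb_trans (genEmb_of_equiv (Equiv.inducedStructureEquiv (eqv i)))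
      (genEmb_trans h1 (genEmb_of_equiv (Equiv.inducedStructureEquiv (eqv j)).symm))
  -- the family of generically hereditary sets
  let A : Set κ.ord.ToType → Set (StructuresType κ) := fun S =>
    Sigma.mk L' '' {P : SmallStructure κ L'.toLanguage | ∃ i ∈ S, P.GenEmb (NN i)}
  have hGH : ∀ S, GenericallyHereditary κ (A S) := by
    intro S
    refine ⟨L', hcard, ?_, ?_⟩
    · rintro M ⟨P, _, rfl⟩
      rfl
    · rintro MA MB ⟨Q, ⟨i, hiS, hQ⟩, hQe⟩ hMP
      have hQMB : Q = MB :=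
        @sigma_mk_injective (SmallLanguage κ)
          (fun Lx : SmallLanguage κ => SmallStructure κ Lx.toLanguage) L' Q MB hQe
      exact ⟨MA, ⟨i, hiS, @genEmb_trans L'.toLanguage _ _ _ (SmallStructure.str MA)
        (SmallStructure.str MB) (SmallStructure.str (NN i)) hMP (hQMB ▸ hQ)⟩, rfl⟩
  have hsub : ∀ S T, A S ⊆ A T → S ⊆ T := by
    intro S T hST i hiS
    have hmem : (⟨L', NN i⟩ : StructuresType κ) ∈ A S :=
      ⟨NN i, ⟨i, hiS, @genEmb_refl L'.toLanguage _ (SmallStructure.str (NN i))⟩, rfl⟩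
    obtain ⟨Q, ⟨j, hjT, hQ⟩, hQe⟩ := hST hmem
    obtain rfl : Q = NN i :=
      @sigma_mk_injective (SmallLanguage κ)
        (fun Lx : SmallLanguage κ => SmallStructure κ Lx.toLanguage) L' Q (NN i) hQe
    rwa [key i j hQ]
  have hAinj : Function.Injective A := fun S T hST =>
    Set.Subset.antisymm (hsub S T hST.le) (hsub T S hST.ge)
  calc 2 ^ κ = #(Set κ.ord.ToType) := by rw [Cardinal.mk_set, hι]
    _ ≤ #{𝒜 : Set (StructuresType κ) | GenericallyHereditary κ 𝒜} :=
      Cardinal.mk_le_of_injective (f := fun S => ⟨A S, hGH S⟩)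
        (fun S T hST => hAinj (congrArg Subtype.val hST))
end

section
/- Let κ be a generic Vopěnka cardinal, let L be a first-order language of cardinality less than κ, and let 𝓑 be a set of L-structures, each with universe the set of ordinals below some ordinal less than κ, that is upward closed under generic elementary embeddability (i.e., for all such L-structures M and N, if M ∈ 𝓑 and there is a generic elementary embedding of M into N, then N ∈ 𝓑). Then 𝓑 is the upward closure of a small subset: there is 𝓑₀ ⊆ 𝓑 with |𝓑₀| < κ such that every structure in 𝓑 admits a generic elementary embedding from some structure in 𝓑₀. -/
open FirstOrder Language Cardinal Set

universe u

namespace GenVopAux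

/-- Extra relation symbols: one unary (`U`) and one binary (`<`). -/
def extraRel : ℕ → Type u
  | 1 => PUnit
  | 2 => PUnit
  | _ => PEmpty

def extraLang : FirstOrder.Language.{u, u} where
  Functions _ := PEmpty
  Relations := extraRel

def padLang (L : FirstOrder.Language.{u, u}) : FirstOrder.Language.{u, u} := L.sum extraLang

def uSymb (L : FirstOrder.Language.{u, u}) : (padLang L).Relations 1 := Sum.inr PUnit.unit
def ltSymb (L : FirstOrder.Language.{u, u}) : (padLang L).Relations 2 := Sum.inr PUnit.unit

instance (l : ℕ) : IsEmpty (extraLang.{u}.Functions l) := ⟨fun x => x.elim⟩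

instance (n : ℕ) : Subsingleton (extraRel.{u} n) :=
  match n with
  | 0 => inferInstanceAs (Subsingleton PEmpty)
  | 1 => inferInstanceAs (Subsingleton PUnit)
  | 2 => inferInstanceAs (Subsingleton PUnit)
  | (_+3) => inferInstanceAs (Subsingleton PEmpty)

instance (n : ℕ) : Subsingleton (extraLang.{u}.Relations n) :=
  inferInstanceAs (Subsingleton (extraRel n))

theorem extraLang_card_le : extraLang.{u}.card ≤ ℵ₀ := Cardinal.mk_le_aleph0

theorem padLang_card_le (L : FirstOrder.Language.{u, u}) : (padLang L).card ≤ L.card + ℵ₀ := by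
  rw [padLang, Language.card_sum, Cardinal.lift_id, Cardinal.lift_id]
  exact add_le_add le_rfl extraLang_card_le

section Pad

variable {W : Type u} [LinearOrder W] {L : FirstOrder.Language.{u, u}} {a b : W}

/-- The "padded" structure on `Iio b` extending a structure on `Iio a`. -/
noncomputable def padStructure (hab : a < b) (S : L.Structure ↥(Iio a)) :
    (padLang L).Structure ↥(Iio b) where
  funMap {n} f v :=
    match f with
    | Sum.inl f =>
      if h' : ∀ k, (v k : W) < a then
        ⟨((S.funMap f fun k => ⟨v k, h' k⟩ : ↥(Iio a)) : W),
          lt_trans (S.funMap f fun k => ⟨v k, h' k⟩).2 hab⟩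
      else ⟨a, hab⟩
    | Sum.inr e => e.elim
  RelMap {n} r v :=
    match r with
    | Sum.inl r => ∃ h' : ∀ k, (v k : W) < a, S.RelMap r fun k => ⟨v k, h' k⟩
    | Sum.inr e =>
      match n, e, v with
      | 1, _, v => (v 0 : W) < a
      | 2, _, v => (v 0 : W) < (v 1 : W)
      | 0, e, _ => e.elim
      | (_+3), e, _ => e.elim

variable (hab : a < b) (S : L.Structure ↥(Iio a))

theorem relMap_uSymb (v : Fin 1 → ↥(Iio b)) :
    (padStructure hab S).RelMap (uSymb L) v ↔ (v 0 : W) < a := Iff.rfl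

theorem relMap_ltSymb (v : Fin 2 → ↥(Iio b)) :
    (padStructure hab S).RelMap (ltSymb L) v ↔ (v 0 : W) < (v 1 : W) := Iff.rfl

end Pad

end GenVopAux

namespace GenVopAux

section Rel

variable {W : Type u} [LinearOrder W] {L : FirstOrder.Language.{u, u}} {a b : W}
variable {α : Type v}

/-- Map an `L`-term to a `padLang L`-term. -/
def padTerm {γ : Type v} : L.Term γ → (padLang L).Term γ
  | .var k => .var k
  | .func f ts => .func (Sum.inl f) fun k => padTerm (ts k)

/-- Relativization of an `L`-formula to the `U`-part, as a `padLang L`-formula. -/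
def padFormula : ∀ {n}, L.BoundedFormula α n → (padLang L).BoundedFormula α n
  | _, .falsum => .falsum
  | _, .equal t₁ t₂ => .equal (padTerm t₁) (padTerm t₂)
  | _, .rel R ts => .rel (Sum.inl R) fun k => padTerm (ts k)
  | _, .imp f g => .imp (padFormula f) (padFormula g)
  | n, .all f =>
    .all ((BoundedFormula.rel (uSymb L) ![Term.var (Sum.inr (Fin.last n))]).imp (padFormula f))

variable (hab : a < b) (S : L.Structure ↥(Iio a))

theorem realize_padTerm {γ : Type v} (xs : γ → ↥(Iio b)) (hxs : ∀ k, (xs k : W) < a)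
    (τ : L.Term γ) :
    @Term.realize (padLang L) _ (padStructure hab S) _ xs (padTerm τ)
      = ⟨((@Term.realize L _ S _ (fun k => ⟨xs k, hxs k⟩) τ : ↥(Iio a)) : W),
          lt_trans (@Term.realize L _ S _ (fun k => ⟨xs k, hxs k⟩) τ).2 hab⟩ := by
  induction τ with
  | var k => exact Subtype.ext rfl
  | func f ts ih =>
    simp only [padTerm, Term.realize_func]
    have hk : ∀ k, ((@Term.realize (padLang L) _ (padStructure hab S) _ xs (padTerm (ts k))
        : ↥(Iio b)) : W) < a := by
      intro k; rw [ih k]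
      exact (Term.realize (fun k => (⟨xs k, hxs k⟩ : ↥(Iio a))) (ts k)).2
    show (padStructure hab S).funMap (Sum.inl f) _ = _
    show (if h' : ∀ k, ((@Term.realize (padLang L) _ (padStructure hab S) _ xs
        (padTerm (ts k)) : ↥(Iio b)) : W) < a then _ else _) = _
    rw [dif_pos hk]
    refine Subtype.ext ?_
    show ((S.funMap f fun k => ⟨_, hk k⟩ : ↥(Iio a)) : W) = _
    congr 2
    funext k
    have h := congrArg Subtype.val (ih k)
    exact Subtype.ext h

end Rel

end GenVopAux

namespace GenVopAux

section Rel2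

variable {W : Type u} [LinearOrder W] {L : FirstOrder.Language.{u, u}} {a b : W}
variable {α : Type v}
variable (hab : a < b) (S : L.Structure ↥(Iio a))

/-- Restrict a `U`-valued tuple in `Iio b` to `Iio a`. -/
def resMap {β : Sort*} (v : β → ↥(Iio b)) (h : ∀ k, ((v k : ↥(Iio b)) : W) < a) :
    β → ↥(Iio a) := fun k => ⟨((v k : ↥(Iio b)) : W), h k⟩

theorem realize_padFormula {n : ℕ} (φ : L.BoundedFormula α n) (xs : α → ↥(Iio b))
    (hxs : ∀ k, (xs k : W) < a) :
    ∀ (ys : Fin n → ↥(Iio b)) (hys : ∀ k, (ys k : W) < a),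
    (@BoundedFormula.Realize (padLang L) ↥(Iio b) (padStructure hab S) _ _ (padFormula φ) xs ys
      ↔ @BoundedFormula.Realize L ↥(Iio a) S _ _ φ (resMap xs hxs) (resMap ys hys)) := by
  induction φ with
  | falsum => intro ys hys; exact Iff.rfl
  | @equal m t₁ t₂ =>
    intro ys hys
    have hall : ∀ k, ((Sum.elim xs ys k : ↥(Iio b)) : W) < a := by
      intro k; cases k with
      | inl k => exact hxs k
      | inr k => exact hys k
    have E : resMap (Sum.elim xs ys) hall = Sum.elim (resMap xs hxs) (resMap ys hys) :=
      funext fun k => by cases k <;> rfl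
    show @Term.realize (padLang L) _ (padStructure hab S) _ (Sum.elim xs ys) (padTerm t₁)
        = @Term.realize (padLang L) _ (padStructure hab S) _ (Sum.elim xs ys) (padTerm t₂)
      ↔ @Term.realize L _ S _ (Sum.elim (resMap xs hxs) (resMap ys hys)) t₁
        = @Term.realize L _ S _ (Sum.elim (resMap xs hxs) (resMap ys hys)) t₂
    rw [realize_padTerm hab S _ hall t₁, realize_padTerm hab S _ hall t₂]
    rw [show (fun k => (⟨((Sum.elim xs ys k : ↥(Iio b)) : W), hall k⟩ : ↥(Iio a)))
          = Sum.elim (resMap xs hxs) (resMap ys hys) from E]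
    constructor
    · intro h
      have h' := congrArg Subtype.val h
      exact Subtype.ext h'
    · intro h
      have h' := congrArg Subtype.val h
      exact Subtype.ext h'
  | @rel m l R ts =>
    intro ys hys
    have hall : ∀ k, ((Sum.elim xs ys k : ↥(Iio b)) : W) < a := by
      intro k; cases k with
      | inl k => exact hxs k
      | inr k => exact hys k
    have E : resMap (Sum.elim xs ys) hall = Sum.elim (resMap xs hxs) (resMap ys hys) :=
      funext fun k => by cases k <;> rfl
    have hterm : ∀ t : L.Term (α ⊕ (Fin m)),
        @Term.realize (padLang L) _ (padStructure hab S) _ (Sum.elim xs ys) (padTerm t)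
          = ⟨((Term.realize (Sum.elim (resMap xs hxs) (resMap ys hys)) t : ↥(Iio a)) : W),
              lt_trans (Term.realize (Sum.elim (resMap xs hxs) (resMap ys hys)) t).2 hab⟩ := by
      intro t
      rw [realize_padTerm hab S _ hall t]
      rw [show (fun k => (⟨((Sum.elim xs ys k : ↥(Iio b)) : W), hall k⟩ : ↥(Iio a)))
          = Sum.elim (resMap xs hxs) (resMap ys hys) from E]
    show (∃ h' : ∀ k, ((@Term.realize (padLang L) _ (padStructure hab S) _ (Sum.elim xs ys)
        (padTerm (ts k)) : ↥(Iio b)) : W) < a,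
        S.RelMap R fun k => ⟨_, h' k⟩)
      ↔ S.RelMap R fun k => Term.realize (Sum.elim (resMap xs hxs) (resMap ys hys)) (ts k)
    have h' : ∀ k, ((@Term.realize (padLang L) _ (padStructure hab S) _ (Sum.elim xs ys)
        (padTerm (ts k)) : ↥(Iio b)) : W) < a := by
      intro k; rw [hterm (ts k)]
      exact (Term.realize (Sum.elim (resMap xs hxs) (resMap ys hys)) (ts k)).2
    have Earg : ∀ h'' : ∀ k, ((@Term.realize (padLang L) _ (padStructure hab S) _
        (Sum.elim xs ys) (padTerm (ts k)) : ↥(Iio b)) : W) < a,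
        (fun k => (⟨((@Term.realize (padLang L) _ (padStructure hab S) _
          (Sum.elim xs ys) (padTerm (ts k)) : ↥(Iio b)) : W), h'' k⟩ : ↥(Iio a)))
          = fun k => Term.realize (Sum.elim (resMap xs hxs) (resMap ys hys)) (ts k) := by
      intro h''
      funext k
      have h := congrArg Subtype.val (hterm (ts k))
      exact Subtype.ext h
    constructor
    · rintro ⟨h'', hR⟩
      rwa [Earg h''] at hR
    · intro hR
      refine ⟨h', ?_⟩
      rwa [Earg h']
  | @imp m f g ihf ihg =>
    intro ys hys
    show (@BoundedFormula.Realize (padLang L) ↥(Iio b) (padStructure hab S) _ _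
        (padFormula f) xs ys → @BoundedFormula.Realize (padLang L) ↥(Iio b)
        (padStructure hab S) _ _ (padFormula g) xs ys) ↔ _
    rw [ihf ys hys, ihg ys hys]
    exact Iff.rfl
  | @all m f ih =>
    intro ys hys
    have snoc_lt : ∀ (z : ↥(Iio b)), (z : W) < a →
        ∀ k : Fin (m+1), (((Fin.snoc ys z : Fin (m+1) → ↥(Iio b)) k : ↥(Iio b)) : W) < a := by
      intro z hz k
      refine Fin.lastCases ?_ ?_ k
      · rw [Fin.snoc_last]; exact hz
      · intro k'; rw [Fin.snoc_castSucc]; exact hys k'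
    have Esnoc : ∀ (z : ↥(Iio b)) (hz : (z : W) < a),
        resMap (Fin.snoc ys z : Fin (m+1) → ↥(Iio b)) (snoc_lt z hz)
          = Fin.snoc (resMap ys hys) (⟨(z : W), hz⟩ : ↥(Iio a)) := by
      intro z hz
      funext k
      refine Fin.lastCases ?_ ?_ k
      · refine Subtype.ext ?_
        show (((Fin.snoc ys z : Fin (m+1) → ↥(Iio b)) (Fin.last m) : ↥(Iio b)) : W)
          = (((Fin.snoc (resMap ys hys) (⟨(z : W), hz⟩ : ↥(Iio a)) : Fin (m+1) → ↥(Iio a))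
              (Fin.last m) : ↥(Iio a)) : W)
        rw [Fin.snoc_last, Fin.snoc_last]
      · intro k'
        refine Subtype.ext ?_
        show (((Fin.snoc ys z : Fin (m+1) → ↥(Iio b)) (Fin.castSucc k') : ↥(Iio b)) : W)
          = (((Fin.snoc (resMap ys hys) (⟨(z : W), hz⟩ : ↥(Iio a)) : Fin (m+1) → ↥(Iio a))
              (Fin.castSucc k') : ↥(Iio a)) : W)
        rw [Fin.snoc_castSucc, Fin.snoc_castSucc]
        rfl
    have hUiff : ∀ (z : ↥(Iio b)),
        (@BoundedFormula.Realize (padLang L) ↥(Iio b) (padStructure hab S) _ _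
          (BoundedFormula.rel (uSymb L) ![Term.var (Sum.inr (Fin.last m))]) xs
          (Fin.snoc ys z : Fin (m+1) → ↥(Iio b))
        ↔ (z : W) < a) := by
      intro z
      have : ((Sum.elim xs (Fin.snoc ys z : Fin (m+1) → ↥(Iio b)) (Sum.inr (Fin.last m))
          : ↥(Iio b)) : W) < a ↔ (z : W) < a := by
        show (((Fin.snoc ys z : Fin (m+1) → ↥(Iio b)) (Fin.last m) : ↥(Iio b)) : W) < a ↔ _
        rw [Fin.snoc_last]
      exact this
    constructor
    · intro h w
      have hzlt : ((⟨(w : W), lt_trans w.2 hab⟩ : ↥(Iio b)) : W) < a := w.2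
      have hz' := h ⟨(w : W), lt_trans w.2 hab⟩ ((hUiff _).mpr hzlt)
      have := (ih (Fin.snoc ys ⟨(w : W), lt_trans w.2 hab⟩) (snoc_lt _ hzlt)).mp hz'
      rw [Esnoc _ hzlt] at this
      exact this
    · intro h z hUz
      have hz : (z : W) < a := (hUiff z).mp hUz
      refine (ih (Fin.snoc ys z) (snoc_lt z hz)).mpr ?_
      rw [Esnoc z hz]
      exact h ⟨(z : W), hz⟩

end Rel2

end GenVopAux

namespace GenVopAux

section Game

variable {W : Type u} [LinearOrder W] {L : FirstOrder.Language.{u, u}}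

/-- The unary "is in `U`" formula applied to variable `p`. -/
def uFormula (L : FirstOrder.Language.{u, u}) (m : ℕ) (p : Fin m) : (padLang L).Formula (Fin m) :=
  BoundedFormula.rel (uSymb L) ![Term.var (Sum.inl p)]

/-- The binary "less than" formula applied to variables `p`, `q`. -/
def ltFormula (L : FirstOrder.Language.{u, u}) (m : ℕ) (p q : Fin m) :
    (padLang L).Formula (Fin m) :=
  BoundedFormula.rel (ltSymb L) ![Term.var (Sum.inl p), Term.var (Sum.inl q)]

variable {a b : W} (hab : a < b) (S : L.Structure ↥(Iio a))

theorem realize_uFormula {m : ℕ} (p : Fin m) (v : Fin m → ↥(Iio b)) :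
    @Formula.Realize (padLang L) ↥(Iio b) (padStructure hab S) _ (uFormula L m p) v
      ↔ (v p : W) < a :=
  Iff.rfl

theorem realize_ltFormula {m : ℕ} (p q : Fin m) (v : Fin m → ↥(Iio b)) :
    @Formula.Realize (padLang L) ↥(Iio b) (padStructure hab S) _ (ltFormula L m p q) v
      ↔ (v p : W) < (v q : W) :=
  Iff.rfl

end Game

section Chain

variable {W : Type u} [LinearOrder W]

/-- Player I's diagonal counterplay against a strategy `σ`, assuming `t₂ < t₁`. -/
noncomputable def chainX {t₁ t₂ : W} (h : t₂ < t₁)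
    (σ : (n : ℕ) → (Fin (n + 1) → ↥(Iio t₁)) → ↥(Iio t₂)) : ℕ → ↥(Iio t₁)
  | 0 => ⟨t₂, h⟩
  | n + 1 =>
    ⟨((σ n fun j : Fin (n + 1) => chainX h σ j) : W),
      lt_trans (σ n fun j : Fin (n + 1) => chainX h σ j).2 h⟩
  termination_by n => n
  decreasing_by all_goals exact j.isLt

theorem pad_le_top [WellFoundedLT W] {L : FirstOrder.Language.{u, u}} {a₁ a₂ t₁ t₂ : W}
    (h₁ : a₁ < t₁) (h₂ : a₂ < t₂) (S₁ : L.Structure ↥(Iio a₁)) (S₂ : L.Structure ↥(Iio a₂))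
    (h : @IsGenericEmbeddable (padLang L) ↥(Iio t₁) ↥(Iio t₂)
      (padStructure h₁ S₁) (padStructure h₂ S₂)) :
    t₁ ≤ t₂ := by
  by_contra hlt
  push_neg at hlt
  obtain ⟨σ, hσ⟩ := h
  set x : ℕ → ↥(Iio t₁) := chainX hlt σ with hx
  have hxsucc : ∀ n, (x (n + 1) : W) = ((σ n fun j : Fin (n + 1) => x j) : W) := by
    intro n
    rw [hx]
    rw [chainX]
  have hdesc : ∀ n, (x (n + 1) : W) < (x n : W) := by
    intro n
    induction n with
    | zero =>
      rw [hxsucc 0]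
      have h0 : (x 0 : W) = t₂ := by rw [hx, chainX]
      rw [h0]
      exact (σ 0 fun j : Fin 1 => x j).2
    | succ n ihn =>
      have hw := hσ x (n + 1) (ltFormula L (n + 2) ⟨n + 1, by omega⟩ ⟨n, by omega⟩)
      rw [realize_ltFormula h₁ S₁, realize_ltFormula h₂ S₂] at hw
      have hlt1 : ((x (n + 1) : ↥(Iio t₁)) : W) < ((x n : ↥(Iio t₁)) : W) := ihn
      have := hw.mp hlt1
      rw [hxsucc (n + 1), hxsucc n]
      exact this
  have hne : (Set.range fun n => (x n : W)).Nonempty := ⟨(x 0 : W), ⟨0, rfl⟩⟩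
  obtain ⟨n, hn⟩ := (wellFounded_lt (α := W)).min_mem _ hne
  exact (wellFounded_lt (α := W)).not_lt_min (Set.range fun n => (x n : W)) (x := (x (n + 1) : W)) ⟨n + 1, rfl⟩
    (by have hd := hdesc n; rw [show (x n : W) = _ from hn] at hd; exact hd)

end Chain

end GenVopAux

namespace GenVopAux

section Transfer

variable {W : Type u} [LinearOrder W] {L : FirstOrder.Language.{u, u}}

theorem genEmb_of_pad {a₁ a₂ t₁ t₂ : W} (h₁ : a₁ < t₁) (h₂ : a₂ < t₂)
    (S₁ : L.Structure ↥(Iio a₁)) (S₂ : L.Structure ↥(Iio a₂))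
    (h : @IsGenericEmbeddable (padLang L) ↥(Iio t₁) ↥(Iio t₂)
      (padStructure h₁ S₁) (padStructure h₂ S₂)) :
    @IsGenericEmbeddable L ↥(Iio a₁) ↥(Iio a₂) S₁ S₂ := by
  obtain ⟨σ, hσ⟩ := h
  let inc : ↥(Iio a₁) → ↥(Iio t₁) := fun p => ⟨(p : W), lt_trans p.2 h₁⟩
  have hU : ∀ (x : ℕ → ↥(Iio a₁)) (n : ℕ),
      ((σ n fun j : Fin (n + 1) => inc (x j)) : W) < a₂ := by
    intro x n
    have hw := hσ (fun m => inc (x m)) n (uFormula L (n + 1) (Fin.last n))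
    rw [realize_uFormula h₁ S₁, realize_uFormula h₂ S₂] at hw
    exact hw.mp (x ((Fin.last n : Fin (n + 1)) : ℕ)).2
  have hU' : ∀ (n : ℕ) (v : Fin (n + 1) → ↥(Iio a₁)),
      ((σ n fun j => inc (v j)) : W) < a₂ := by
    intro n v
    have h0 := hU (fun m => if hm : m < n + 1 then v ⟨m, hm⟩ else v ⟨0, n.succ_pos⟩) n
    have harg : (fun j : Fin (n + 1) =>
        inc ((fun m : ℕ => if hm : m < n + 1 then v ⟨m, hm⟩ else v ⟨0, n.succ_pos⟩) (j : ℕ)))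
        = fun j => inc (v j) := by
      funext j
      have hb : (if hm : (j : ℕ) < n + 1 then v ⟨(j : ℕ), hm⟩ else v ⟨0, n.succ_pos⟩) = v j := by
        rw [dif_pos j.isLt]
      exact congrArg inc hb
    rwa [harg] at h0
  refine ⟨fun n v => ⟨((σ n fun j => inc (v j)) : W), hU' n v⟩, ?_⟩
  intro x n φ
  have hw := hσ (fun m => inc (x m)) n (padFormula (L := L) (α := Fin (n + 1)) φ)
  have e₁ := realize_padFormula h₁ S₁ φ (fun i : Fin (n + 1) => inc (x ↑i))
    (fun i => (x ↑i).2) default (fun k => k.elim0)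
  have e₂ := realize_padFormula h₂ S₂ φ (fun i : Fin (n + 1) => σ ↑i fun j => inc (x ↑j))
    (fun i => hU x ↑i) default (fun k => k.elim0)
  have r₁ : resMap (fun i : Fin (n + 1) => inc (x ↑i)) (fun i => (x ↑i).2)
      = fun i : Fin (n + 1) => x ↑i := funext fun i => Subtype.ext rfl
  have rdef₁ : resMap (b := t₁) (default : Fin 0 → ↥(Iio t₁)) (fun k => k.elim0)
      = (default : Fin 0 → ↥(Iio a₁)) := funext fun k => k.elim0
  have rdef₂ : resMap (b := t₂) (default : Fin 0 → ↥(Iio t₂)) (fun k => k.elim0)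
      = (default : Fin 0 → ↥(Iio a₂)) := funext fun k => k.elim0
  rw [r₁, rdef₁] at e₁
  rw [rdef₂] at e₂
  exact e₁.symm.trans (hw.trans e₂)

end Transfer

end GenVopAux

namespace GenVopAux

open Ordinal

theorem exists_upper {κ : Cardinal.{u}} (hreg : κ.IsRegular) (hℵ : ℵ₀ < κ)
    (s : Set κ.ord.ToType) (hs : #s < κ) : ∃ u : κ.ord.ToType, ∀ v ∈ s, v < u := by
  classical
  have hlim : Order.IsSuccLimit (κ.ord) := Cardinal.isSuccLimit_ord hℵ.le
  set f : ↥s → Ordinal.{u} :=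
    fun v => Order.succ (((Ordinal.ToType.mk (o := κ.ord)).symm v.1 : Ordinal.{u})) with hf
  have hfb : ∀ v, f v < κ.ord := fun v => hlim.succ_lt ((Ordinal.ToType.mk (o := κ.ord)).symm v.1).2
  have hsup : iSup f < κ.ord := Cardinal.iSup_lt_ord_of_isRegular hreg hs hfb
  refine ⟨Ordinal.ToType.mk (o := κ.ord) ⟨iSup f, hsup⟩, ?_⟩
  intro v hv
  have h2 : ((Ordinal.ToType.mk (o := κ.ord)).symm v : Ordinal.{u}) < iSup f := by
    have h3 : f ⟨v, hv⟩ ≤ iSup f := Ordinal.le_iSup f ⟨v, hv⟩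
    exact lt_of_lt_of_le (Order.lt_succ _) h3
  have h3 : (Ordinal.ToType.mk (o := κ.ord)).symm v
      < (Ordinal.ToType.mk (o := κ.ord)).symm (Ordinal.ToType.mk (o := κ.ord) ⟨iSup f, hsup⟩) := by
    rw [(Ordinal.ToType.mk (o := κ.ord)).symm_apply_apply]
    exact Subtype.coe_lt_coe.mp h2
  exact ((Ordinal.ToType.mk (o := κ.ord)).symm.lt_iff_lt).mp h3

end GenVopAux


open GenVopAux in
/-- Let `κ` be a generic Vopěnka cardinal, `L` a language of cardinality less than `κ`, and
`𝓑` a set of `L`-structures (each with universe the set of ordinals below some ordinal less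
than `κ`) that is upward closed under generic elementary embeddability.  Then `𝓑` is
the upward closure of a subset `𝓑₀ ⊆ 𝓑` of cardinality less than `κ`. -/
theorem upward_closed_generated_by_small_subset (κ : Cardinal.{u}) (hκ : IsGenericVopenka κ)
    (L : FirstOrder.Language.{u, u}) (hL : L.card < κ)
    (𝓑 : Set (SmallStructure κ L))
    (hup : ∀ M N : SmallStructure κ L, M ∈ 𝓑 → M.GenEmb N → N ∈ 𝓑) :
    ∃ 𝓑₀ ⊆ 𝓑, #↥𝓑₀ < κ ∧ ∀ N ∈ 𝓑, ∃ M ∈ 𝓑₀, SmallStructure.GenEmb M N := by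
  classical
  obtain ⟨hreg, hℵ, hvop⟩ := hκ
  by_contra hcon
  push_neg at hcon
  have key : ∀ (i : κ.ord.ToType) (prior : ∀ j, j < i → SmallStructure κ L × κ.ord.ToType),
      ∃ P : SmallStructure κ L × κ.ord.ToType,
        (P.1 ∈ 𝓑 ∧ ∀ j (hj : j < i), (prior j hj).1 ∈ 𝓑 →
            ¬ (prior j hj).1.GenEmb P.1) ∧
        P.1.top < P.2 ∧ ∀ j (hj : j < i), (prior j hj).2 < P.2 := by
    intro i prior
    set 𝓑₀ : Set (SmallStructure κ L) :=
      {M | M ∈ 𝓑 ∧ ∃ j, ∃ hj : j < i, (prior j hj).1 = M} with h𝓑₀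
    have hsub : 𝓑₀ ⊆ 𝓑 := fun M hM => hM.1
    have hcard : #↥𝓑₀ < κ := by
      have hss : 𝓑₀ ⊆ Set.range (fun p : ↥(Iio i) => (prior p.1 p.2).1) := by
        rintro M ⟨hM, j, hj, rfl⟩
        exact ⟨⟨j, hj⟩, rfl⟩
      refine lt_of_le_of_lt (Cardinal.mk_le_mk_of_subset hss) ?_
      refine lt_of_le_of_lt Cardinal.mk_range_le ?_
      exact Cardinal.mk_Iio_ord_toType i
    obtain ⟨N, hN𝓑, hNemb⟩ := hcon 𝓑₀ hsub hcard
    obtain ⟨uu, huu⟩ := exists_upper hreg hℵ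
      ({N.top} ∪ Set.range (fun p : ↥(Iio i) => (prior p.1 p.2).2)) (by
        refine lt_of_le_of_lt (Cardinal.mk_union_le _ _) ?_
        refine Cardinal.add_lt_of_lt hℵ.le ?_ ?_
        · rw [Cardinal.mk_singleton]
          exact lt_trans Cardinal.one_lt_aleph0 hℵ
        · exact lt_of_le_of_lt Cardinal.mk_range_le (Cardinal.mk_Iio_ord_toType i))
    refine ⟨(N, uu), ⟨hN𝓑, ?_⟩, ?_, ?_⟩
    · intro j hj hmem hemb
      exact hNemb (prior j hj).1 ⟨hmem, j, hj, rfl⟩ hemb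
    · exact huu N.top (Or.inl rfl)
    · intro j hj
      exact huu _ (Or.inr ⟨⟨j, hj⟩, rfl⟩)
  choose step hstep using key
  set Φ : κ.ord.ToType → SmallStructure κ L × κ.ord.ToType :=
    (wellFounded_lt (α := κ.ord.ToType)).fix step with hΦdef
  have hΦ : ∀ i, Φ i = step i (fun j _ => Φ j) := fun i =>
    (wellFounded_lt (α := κ.ord.ToType)).fix_eq step i
  set F : κ.ord.ToType → SmallStructure κ L := fun i => (Φ i).1 with hFdef
  set t : κ.ord.ToType → κ.ord.ToType := fun i => (Φ i).2 with htdef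
  have hF𝓑 : ∀ i, F i ∈ 𝓑 := by
    intro i
    have h1 := (hstep i (fun j _ => Φ j)).1.1
    have e : F i = (step i (fun j _ => Φ j)).1 := congrArg Prod.fst (hΦ i)
    rw [e]
    exact h1
  have hFemb : ∀ i j, j < i → ¬ (F j).GenEmb (F i) := by
    intro i j hj
    have h1 := (hstep i (fun j _ => Φ j)).1.2 j hj (hF𝓑 j)
    have e : F i = (step i (fun j _ => Φ j)).1 := congrArg Prod.fst (hΦ i)
    rw [e]
    exact h1
  have htop : ∀ i, (F i).top < t i := by
    intro i
    have e1 : F i = (step i fun j _ => Φ j).1 := congrArg Prod.fst (hΦ i)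
    have e2 : t i = (step i fun j _ => Φ j).2 := congrArg Prod.snd (hΦ i)
    rw [e1, e2]
    exact (hstep i (fun j _ => Φ j)).2.1
  have htmono : ∀ i j, j < i → t j < t i := by
    intro i j hj
    have e2 : t i = (step i fun j _ => Φ j).2 := congrArg Prod.snd (hΦ i)
    rw [e2]
    exact (hstep i (fun j _ => Φ j)).2.2 j hj
  have hLp : (padLang L).card < κ := by
    refine lt_of_le_of_lt (padLang_card_le L) ?_
    exact Cardinal.add_lt_of_lt hℵ.le hL hℵ
  obtain ⟨i, j, hne, hemb⟩ := hvop (padLang L) hLp (fun i => ↥(Iio (t i)))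
    (fun i => padStructure (htop i) (F i).str) (fun i => Cardinal.mk_Iio_ord_toType (t i))
  have hle : t i ≤ t j := pad_le_top (htop i) (htop j) (F i).str (F j).str hemb
  have hij : i < j := by
    rcases lt_or_gt_of_ne hne with h | h
    · exact h
    · exact absurd (htmono i j h) (not_lt.mpr hle)
  exact hFemb j i hij (genEmb_of_pad (htop i) (htop j) (F i).str (F j).str hemb)
end
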